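/- If G and G' are adjacent simple d-regular bipartite graphs (i.e., related by one simple switching), then the anti-expansion measure satisfies Z(G) ≤ Z(G') + 2d². -/

import Mathlib

open Finset

/-- A bipartite multigraph on `[n] ⊔ [m]` encoded by its adjacency (multiplicity) matrix. -/
def IsReg (n d : ℕ) (A : Fin n → Fin n → ℕ) : Prop :=
  (∀ i, ∑ j, A i j = d) ∧ (∀ j, ∑ i, A i j = d)

/-- A multigraph is simple if all multiplicities are at most one. -/
def IsSimpleG {n m : ℕ} (A : Fin n → Fin m → ℕ) : Prop := ∀ i j, A i j ≤ 1

/-- The simple switching `⟨i,i',j,j'⟩`: replace the edges `(i,j)` and `(i',j')` by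
`(i,j')` and `(i',j)`. -/
def switchM {n m : ℕ} (A : Fin n → Fin m → ℕ) (i i' : Fin n) (j j' : Fin m) :
    Fin n → Fin m → ℕ :=
  fun a b =>
    if a = i ∧ b = j then A a b - 1
    else if a = i' ∧ b = j' then A a b - 1
    else if a = i ∧ b = j' then A a b + 1
    else if a = i' ∧ b = j then A a b + 1
    else A a b

/-- Two multigraphs are adjacent if one is obtained from the other by a simple switching
operated on two non-incident edges. -/
def AdjacentM {n : ℕ} (A B : Fin n → Fin n → ℕ) : Prop :=
  ∃ i i' j j', i ≠ i' ∧ j ≠ j' ∧ 0 < A i j ∧ 0 < A i' j' ∧ B = switchM A i i' j j'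

/-- `Cat_{n,d}(k)`: `d`-regular bipartite multigraphs with exactly `k` multiplicity-2 edges,
no two of them incident, and no multiplicities `≥ 3`. -/
def InCat (n d k : ℕ) (A : Fin n → Fin n → ℕ) : Prop :=
  IsReg n d A ∧ (∀ i j, A i j ≤ 2) ∧
    (Finset.univ.filter fun p : Fin n × Fin n => A p.1 p.2 = 2).card = k ∧
    (∀ i j j', A i j = 2 → A i j' = 2 → j = j') ∧
    (∀ i i' j, A i j = 2 → A i' j = 2 → i = i')

/-- The set of multiedges (multiplicity-2 edges) of a multigraph. -/
def MEs {n : ℕ} (A : Fin n → Fin n → ℕ) : Finset (Fin n × Fin n) :=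
  Finset.univ.filter fun p => A p.1 p.2 = 2

/-- The data of a simple path starting at a multigraph `A ∈ Cat_{n,d}(k)`: to each
multiedge `e = (i_s, j_s)` of `A` it assigns the auxiliary edge `f e = (i'_s, j'_s)` used by
the corresponding simple switching `⟨i_s, i'_s, j_s, j'_s⟩`.  The auxiliary left (resp. right)
vertices are pairwise distinct, avoid all multiedge left (resp. right) vertices, and the
switching creates no multiple edges. -/
def SimplePathData {n : ℕ} (A : Fin n → Fin n → ℕ)
    (f : Fin n × Fin n → Fin n × Fin n) : Prop :=
  (∀ e ∈ MEs A, 0 < A (f e).1 (f e).2 ∧ A (f e).1 e.2 = 0 ∧ A e.1 (f e).2 = 0 ∧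
    ∀ e' ∈ MEs A, (f e).1 ≠ e'.1 ∧ (f e).2 ≠ e'.2) ∧
  ∀ e ∈ MEs A, ∀ e' ∈ MEs A, e ≠ e' → (f e).1 ≠ (f e').1 ∧ (f e).2 ≠ (f e').2

/-- The endpoint of the simple path with data `f` starting at `A`: each multiedge
`(i_s,j_s)` loses one parallel edge, the auxiliary edge `(i'_s,j'_s)` is removed, and the
edges `(i_s,j'_s)` and `(i'_s,j_s)` are added. -/
def endpointM {n : ℕ} (A : Fin n → Fin n → ℕ) (f : Fin n × Fin n → Fin n × Fin n) :
    Fin n → Fin n → ℕ :=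
  fun a b =>
    A a b + ((MEs A).filter fun e => (a = e.1 ∧ b = (f e).2) ∨ (a = (f e).1 ∧ b = e.2)).card
      - ((MEs A).filter fun e => (a = e.1 ∧ b = e.2) ∨ (a = (f e).1 ∧ b = (f e).2)).card

/-- The `s`-neighborhood of a multigraph: all endpoints of simple paths starting at it. -/
def SN {n : ℕ} (A : Fin n → Fin n → ℕ) : Set (Fin n → Fin n → ℕ) :=
  {B | ∃ f, SimplePathData A f ∧ B = endpointM A f}

/-- The anti-expansion measure `Z(G)` of a simple graph. -/
def Zae {n : ℕ} (A : Fin n → Fin n → ℕ) : ℕ :=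
  (Finset.univ.filter fun p : Fin n × Fin n =>
    0 < A p.1 p.2 ∧ ∃ k, k ≠ p.1 ∧ 0 < A k p.2 ∧
      2 ≤ (Finset.univ.filter fun j => 0 < A p.1 j ∧ 0 < A k j).card).card

/-- If `G` and `G'` are adjacent simple `d`-regular bipartite graphs then
`Z(G) ≤ Z(G') + 2d²`. -/
theorem stmt3 (n d : ℕ) (A B : Fin n → Fin n → ℕ)
    (hAreg : IsReg n d A) (hAs : IsSimpleG A)
    (hBreg : IsReg n d B) (hBs : IsSimpleG B)
    (hadj : AdjacentM A B) :
    Zae A ≤ Zae B + 2 * d ^ 2 := by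
  obtain ⟨i, i', j, j', hii, hjj, hAij, hAi'j', hB⟩ := hadj
  have hrow : ∀ a, a ≠ i → a ≠ i' → ∀ b, B a b = A a b := by
    intro a ha ha' b
    subst hB
    simp [switchM, ha, ha']
  have hcol : ∀ c : Fin n, (univ.filter fun a => 0 < A a c).card ≤ d := by
    intro c
    calc (univ.filter fun a => 0 < A a c).card
        = ∑ a ∈ univ.filter (fun a => 0 < A a c), 1 := by simp
      _ ≤ ∑ a ∈ univ.filter (fun a => 0 < A a c), A a c :=
          Finset.sum_le_sum (fun a ha => (Finset.mem_filter.mp ha).2)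
      _ ≤ ∑ a, A a c := Finset.sum_le_sum_of_subset (Finset.filter_subset _ _)
      _ = d := hAreg.2 c
  have hrowcard : ∀ a : Fin n, (univ.filter fun c => 0 < A a c).card ≤ d := by
    intro a
    calc (univ.filter fun c => 0 < A a c).card
        = ∑ c ∈ univ.filter (fun c => 0 < A a c), 1 := by simp
      _ ≤ ∑ c ∈ univ.filter (fun c => 0 < A a c), A a c :=
          Finset.sum_le_sum (fun c hc => (Finset.mem_filter.mp hc).2)
      _ ≤ ∑ c, A a c := Finset.sum_le_sum_of_subset (Finset.filter_subset _ _)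
      _ = d := hAreg.1 a
  set S : Finset (Fin n) := univ.filter (fun c => 0 < A i c ∨ 0 < A i' c) with hSdef
  have hScard : S.card ≤ 2 * d := by
    have hsub : S ⊆ (univ.filter fun c => 0 < A i c) ∪ (univ.filter fun c => 0 < A i' c) := by
      intro c hc
      simp only [hSdef, Finset.mem_filter, Finset.mem_union, Finset.mem_univ, true_and] at *
      tauto
    calc S.card ≤ _ := Finset.card_le_card hsub
      _ ≤ _ + _ := Finset.card_union_le _ _
      _ ≤ d + d := Nat.add_le_add (hrowcard i) (hrowcard i')
      _ = 2 * d := by ring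
  set Bad : Finset (Fin n × Fin n) :=
    univ.filter (fun p => 0 < A p.1 p.2 ∧ p.2 ∈ S) with hBaddef
  have hBadcard : Bad.card ≤ 2 * d ^ 2 := by
    have hfib : Bad.card = ∑ c ∈ S, (Bad.filter fun p => p.2 = c).card :=
      Finset.card_eq_sum_card_fiberwise (fun p hp => by
        simp only [hBaddef, Finset.mem_filter, Finset.mem_coe] at hp; exact hp.2.2)
    have hle : ∀ c ∈ S, (Bad.filter fun p => p.2 = c).card ≤ d := by
      intro c hc
      have h1 : (Bad.filter fun p => p.2 = c).card ≤ (univ.filter fun a => 0 < A a c).card := by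
        apply Finset.card_le_card_of_injOn Prod.fst
        · intro p hp
          simp only [hBaddef, Finset.mem_filter, Finset.mem_univ, true_and, Finset.mem_coe] at hp ⊢
          obtain ⟨⟨hpos, _⟩, hc2⟩ := hp
          rw [hc2] at hpos
          exact hpos
        · intro p hp q hq h
          simp only [hBaddef, Finset.mem_filter, Finset.mem_coe] at hp hq
          exact Prod.ext h (hp.2.trans hq.2.symm)
      exact h1.trans (hcol c)
    calc Bad.card = ∑ c ∈ S, (Bad.filter fun p => p.2 = c).card := hfib
      _ ≤ ∑ _c ∈ S, d := Finset.sum_le_sum hle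
      _ = S.card * d := by simp [Finset.sum_const, Nat.smul_one_eq_cast]
      _ ≤ 2 * d * d := Nat.mul_le_mul_right d hScard
      _ = 2 * d ^ 2 := by ring
  -- the Zae filter sets
  set TA : Finset (Fin n × Fin n) := univ.filter (fun p : Fin n × Fin n =>
    0 < A p.1 p.2 ∧ ∃ k, k ≠ p.1 ∧ 0 < A k p.2 ∧
      2 ≤ (Finset.univ.filter fun jx => 0 < A p.1 jx ∧ 0 < A k jx).card) with hTAdef
  set TB : Finset (Fin n × Fin n) := univ.filter (fun p : Fin n × Fin n =>
    0 < B p.1 p.2 ∧ ∃ k, k ≠ p.1 ∧ 0 < B k p.2 ∧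
      2 ≤ (Finset.univ.filter fun jx => 0 < B p.1 jx ∧ 0 < B k jx).card) with hTBdef
  have hZA : Zae A = TA.card := rfl
  have hZB : Zae B = TB.card := rfl
  set GP : Fin n × Fin n → Prop := fun p =>
    p.1 ≠ i ∧ p.1 ≠ i' ∧ ∃ k, k ≠ p.1 ∧ k ≠ i ∧ k ≠ i' ∧ 0 < A k p.2 ∧
      2 ≤ (Finset.univ.filter fun jx => 0 < A p.1 jx ∧ 0 < A k jx).card with hGPdef
  have hsplit : (TA.filter GP).card + (TA.filter (fun p => ¬ GP p)).card = TA.card :=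
    Finset.card_filter_add_card_filter_not (p := GP)
  have hgood : TA.filter GP ⊆ TB := by
    intro p hp
    simp only [hTAdef, hTBdef, hGPdef, Finset.mem_filter, Finset.mem_univ, true_and] at hp ⊢
    obtain ⟨⟨hpos, _⟩, h1, h2, k, hk, hki, hki', hkpos, hkcard⟩ := hp
    have hfeq : (Finset.univ.filter fun jx => 0 < B p.1 jx ∧ 0 < B k jx)
        = (Finset.univ.filter fun jx => 0 < A p.1 jx ∧ 0 < A k jx) :=
      Finset.filter_congr (fun jx _ => by rw [hrow p.1 h1 h2 jx, hrow k hki hki' jx])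
    refine ⟨by rw [hrow p.1 h1 h2]; exact hpos, k, hk, by rw [hrow k hki hki']; exact hkpos, ?_⟩
    rw [hfeq]; exact hkcard
  have hbad : TA.filter (fun p => ¬ GP p) ⊆ Bad := by
    intro p hp
    simp only [hTAdef, hGPdef, Finset.mem_filter, Finset.mem_univ, true_and] at hp
    obtain ⟨⟨hpos, k, hk, hkpos, hkcard⟩, hnG⟩ := hp
    simp only [hBaddef, hSdef, Finset.mem_filter, Finset.mem_univ, true_and]
    refine ⟨hpos, ?_⟩
    by_cases h1 : p.1 = i
    · left; rw [← h1]; exact hpos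
    by_cases h2 : p.1 = i'
    · right; rw [← h2]; exact hpos
    by_cases hki : k = i
    · left; rw [← hki]; exact hkpos
    by_cases hki' : k = i'
    · right; rw [← hki']; exact hkpos
    exact absurd ⟨h1, h2, k, hk, hki, hki', hkpos, hkcard⟩ hnG
  calc Zae A = (TA.filter GP).card + (TA.filter (fun p => ¬ GP p)).card := by
        rw [hZA, hsplit]
    _ ≤ TB.card + Bad.card :=
        Nat.add_le_add (Finset.card_le_card hgood) (Finset.card_le_card hbad)
    _ ≤ Zae B + 2 * d ^ 2 := by rw [hZB]; exact Nat.add_le_add_left hBadcard _
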